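/- Let X' ⊆ ℝ^n be compact, 𝒳 ⊆ X' a nonempty closed set, φ : 𝒳 → ℝ^n continuous, Γ₁ : ℝ^n ⇉ ℝ^n a closed multifunction, and let 𝒮* = {x ∈ 𝒳 : 0 ∈ φ(x) + Γ₁(x)} be nonempty. Define ℛ(ε) = inf { d(0, φ(x) + Γ₁(x)) : x ∈ 𝒳, d(x, 𝒮*) ≥ ε }. Then ℛ(0) = 0, ℛ is nondecreasing on [0, ∞), and ℛ(ε) > 0 for every ε > 0. -/

import Mathlib

open EMetric

/-- properties of the residual function ℛ. -/
theorem residual_function_properties {n : ℕ}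
    (X' : Set (EuclideanSpace ℝ (Fin n))) (hX' : IsCompact X')
    (𝒳 : Set (EuclideanSpace ℝ (Fin n))) (h𝒳X' : 𝒳 ⊆ X')
    (h𝒳ne : 𝒳.Nonempty) (h𝒳cl : IsClosed 𝒳)
    (φ : EuclideanSpace ℝ (Fin n) → EuclideanSpace ℝ (Fin n))
    (hφ : ContinuousOn φ 𝒳)
    (Γ₁ : EuclideanSpace ℝ (Fin n) → Set (EuclideanSpace ℝ (Fin n)))
    (hΓ₁ : IsClosed {p : EuclideanSpace ℝ (Fin n) × EuclideanSpace ℝ (Fin n) | p.2 ∈ Γ₁ p.1})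
    (S : Set (EuclideanSpace ℝ (Fin n)))
    (hS : S = {x ∈ 𝒳 | (0 : EuclideanSpace ℝ (Fin n)) ∈ (fun z => φ x + z) '' Γ₁ x})
    (hSne : S.Nonempty)
    (R : ℝ → ENNReal)
    (hR : R = fun ε => ⨅ x ∈ {x ∈ 𝒳 | ε ≤ Metric.infDist x S},
      infEdist 0 ((fun z => φ x + z) '' Γ₁ x)) :
    R 0 = 0 ∧ MonotoneOn R (Set.Ici 0) ∧ ∀ ε : ℝ, 0 < ε → 0 < R ε := by
  refine ⟨?_, ?_, ?_⟩
  · -- R 0 = 0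
    obtain ⟨x₀, hx₀⟩ := hSne
    rw [hS] at hx₀
    obtain ⟨hx₀𝒳, hx₀mem⟩ := hx₀
    have hx₀set : x₀ ∈ {x ∈ 𝒳 | (0:ℝ) ≤ Metric.infDist x S} :=
      ⟨hx₀𝒳, Metric.infDist_nonneg⟩
    have hle : R 0 ≤ infEdist 0 ((fun z => φ x₀ + z) '' Γ₁ x₀) := by
      rw [hR]; exact biInf_le _ hx₀set
    rw [show infEdist 0 ((fun z => φ x₀ + z) '' Γ₁ x₀) = 0 from infEdist_zero_of_mem hx₀mem] at hle
    exact le_antisymm hle zero_le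
  · -- monotone
    intro a ha b hb hab
    rw [hR]
    refine biInf_mono ?_
    intro x hx
    exact ⟨hx.1, le_trans hab hx.2⟩
  · -- positivity
    intro ε hε
    rw [pos_iff_ne_zero]
    intro h0
    -- extract a minimizing sequence
    have hseq : ∀ k : ℕ, ∃ x, (x ∈ 𝒳 ∧ ε ≤ Metric.infDist x S) ∧
        ∃ y ∈ Γ₁ x, dist (0 : EuclideanSpace ℝ (Fin n)) (φ x + y) < 1 / (k + 1) := by
      intro k
      have hpos : (0:ℝ) < 1 / (k + 1) := by positivity
      have hlt : R ε < ENNReal.ofReal (1 / (k + 1)) := by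
        rw [h0]; exact ENNReal.ofReal_pos.2 hpos
      rw [hR] at hlt
      simp only [iInf_lt_iff] at hlt
      obtain ⟨x, hx, hxlt⟩ := hlt
      obtain ⟨z, hz, hzlt⟩ := infEdist_lt_iff.1 hxlt
      obtain ⟨y, hy, rfl⟩ := hz
      exact ⟨x, hx, y, hy, (edist_lt_ofReal).1 hzlt⟩
    choose x hx y hy hdist using hseq
    -- compactness: convergent subsequence
    have hxX' : ∀ k, x k ∈ X' := fun k => h𝒳X' (hx k).1
    obtain ⟨p, hpX', g, hg, hconv⟩ := hX'.tendsto_subseq hxX'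
    have hp𝒳 : p ∈ 𝒳 := h𝒳cl.mem_of_tendsto hconv
      (Filter.Eventually.of_forall fun k => (hx (g k)).1)
    -- φ x (g k) + y (g k) → 0
    have hz0 : Filter.Tendsto (fun k => φ (x (g k)) + y (g k)) Filter.atTop (nhds 0) := by
      rw [tendsto_iff_dist_tendsto_zero]
      refine squeeze_zero (g := fun k => 1 / ((g k : ℝ) + 1)) (fun k => dist_nonneg) (fun k => ?_) ?_
      · exact le_of_lt (by rw [dist_comm]; simpa using hdist (g k))
      · have h1 : Filter.Tendsto (fun k : ℕ => 1 / ((k:ℝ) + 1)) Filter.atTop (nhds 0) :=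
          tendsto_one_div_add_atTop_nhds_zero_nat
        exact h1.comp hg.tendsto_atTop
    -- φ x (g k) → φ p
    have hφconv : Filter.Tendsto (fun k => φ (x (g k))) Filter.atTop (nhds (φ p)) := by
      have := (hφ p hp𝒳).tendsto
      exact this.comp (tendsto_nhdsWithin_iff.2 ⟨hconv,
        Filter.Eventually.of_forall fun k => (hx (g k)).1⟩)
    -- y (g k) → -φ p
    have hyconv : Filter.Tendsto (fun k => y (g k)) Filter.atTop (nhds (-φ p)) := by
      have := hz0.sub hφconv
      simpa using this
    -- closed graph
    have hmem : -φ p ∈ Γ₁ p := by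
      have : Filter.Tendsto (fun k => ((x (g k), y (g k)) :
          EuclideanSpace ℝ (Fin n) × EuclideanSpace ℝ (Fin n))) Filter.atTop
          (nhds (p, -φ p)) := hconv.prodMk_nhds hyconv
      exact hΓ₁.mem_of_tendsto this
        (Filter.Eventually.of_forall fun k => hy (g k))
    -- p ∈ S
    have hpS : p ∈ S := by
      rw [hS]
      exact ⟨hp𝒳, ⟨-φ p, hmem, by simp⟩⟩
    -- but infDist p S ≥ ε
    have hdist' : ε ≤ Metric.infDist p S := by
      have hcont : Filter.Tendsto (fun k => Metric.infDist (x (g k)) S) Filter.atTop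
          (nhds (Metric.infDist p S)) :=
        ((Metric.continuous_infDist_pt S).tendsto p).comp hconv
      exact le_of_tendsto_of_tendsto tendsto_const_nhds hcont
        (Filter.Eventually.of_forall fun k => (hx (g k)).2)
    have : Metric.infDist p S = 0 := Metric.infDist_zero_of_mem hpS
    linarith
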